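/- Let F ∈ C¹(ℝ^d, ℝ^p) with d ≤ p and let x₀ ∈ ℝ^d with JF(x₀) = det(DF(x₀)^⊤ DF(x₀))^{1/2} > 0. Set H(x,y) = DF(x)^⊤ DF(y) and let m > 0 be such that v^⊤ H(x₀,x₀) v ≥ m‖v‖² for all v ∈ ℝ^d. Suppose W ⊂ ℝ^d is a convex set containing x₀ such that ‖H(x,y) − H(x₀,x₀)‖₂ ≤ m/2 for all x, y ∈ W. Then for all x, y ∈ W, ‖F(x) − F(y)‖² ≥ (m/2)‖y − x‖², i.e. F is (m/2)^{1/2}-bi-Lipschitz from below on W. -/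

import Mathlib

open Matrix MeasureTheory

lemma cs_aux {d : ℕ} (a b : Fin d → ℝ) :
    |∑ i, a i * b i| ≤ Real.sqrt (∑ i, a i ^ 2) * Real.sqrt (∑ i, b i ^ 2) := by
  have h := abs_real_inner_le_norm ((WithLp.equiv 2 (Fin d → ℝ)).symm a)
    ((WithLp.equiv 2 (Fin d → ℝ)).symm b)
  simpa [PiLp.inner_apply, EuclideanSpace.norm_eq, Real.norm_eq_abs, sq_abs,
    RCLike.inner_apply, mul_comm] using h

lemma dot_aux {d p : ℕ} (A B : Matrix (Fin p) (Fin d) ℝ) (v : Fin d → ℝ) :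
    (A *ᵥ v) ⬝ᵥ (B *ᵥ v) = v ⬝ᵥ ((Aᵀ * B) *ᵥ v) := by
  conv_rhs => rw [← Matrix.mulVec_mulVec, Matrix.dotProduct_mulVec, Matrix.vecMul_transpose]

lemma fderiv_coord {d p : ℕ} (F : EuclideanSpace ℝ (Fin d) → EuclideanSpace ℝ (Fin p))
    (hF : ContDiff ℝ 1 F) (DF : EuclideanSpace ℝ (Fin d) → Matrix (Fin p) (Fin d) ℝ)
    (hDF : ∀ x i j, DF x i j = fderiv ℝ (fun y => F y i) x (EuclideanSpace.single j 1))
    (z : EuclideanSpace ℝ (Fin d)) (v : EuclideanSpace ℝ (Fin d)) (i : Fin p) :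
    (fderiv ℝ F z v) i = (DF z *ᵥ (fun j => v j)) i := by
  have hdiff : DifferentiableAt ℝ F z := hF.differentiable one_ne_zero z
  have hproj : ∀ w : EuclideanSpace ℝ (Fin d),
      fderiv ℝ (fun y => F y i) z w = (fderiv ℝ F z w) i := by
    intro w
    have h2 := ((EuclideanSpace.proj (𝕜 := ℝ) i).hasFDerivAt (x := F z)).comp z hdiff.hasFDerivAt
    have h3 : fderiv ℝ (fun y => F y i) z =
        (EuclideanSpace.proj (𝕜 := ℝ) i).comp (fderiv ℝ F z) := h2.fderiv
    rw [h3]; rfl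
  have hv : v = ∑ j, (v j) • (EuclideanSpace.single j (1:ℝ)) := by
    ext k
    rw [WithLp.ofLp_sum, Finset.sum_apply]
    simp [EuclideanSpace.single_apply]
  calc (fderiv ℝ F z v) i = fderiv ℝ (fun y => F y i) z v := (hproj v).symm
    _ = ∑ j, v j * fderiv ℝ (fun y => F y i) z (EuclideanSpace.single j 1) := by
        conv_lhs => rw [hv]
        rw [map_sum]
        simp [smul_eq_mul]
    _ = (DF z *ᵥ (fun j => v j)) i := by
        simp [Matrix.mulVec, dotProduct, hDF, mul_comm]

theorem stmt14 (d p : ℕ) (hdp : d ≤ p)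
    (F : EuclideanSpace ℝ (Fin d) → EuclideanSpace ℝ (Fin p)) (hF : ContDiff ℝ 1 F)
    (DF : EuclideanSpace ℝ (Fin d) → Matrix (Fin p) (Fin d) ℝ)
    (hDF : ∀ x i j, DF x i j = fderiv ℝ (fun y => F y i) x (EuclideanSpace.single j 1))
    (x₀ : EuclideanSpace ℝ (Fin d))
    (hJ : 0 < Real.sqrt (((DF x₀)ᵀ * DF x₀).det))
    (H : EuclideanSpace ℝ (Fin d) → EuclideanSpace ℝ (Fin d) → Matrix (Fin d) (Fin d) ℝ)
    (hH : ∀ x y, H x y = (DF x)ᵀ * DF y)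
    (m : ℝ) (hm : 0 < m)
    (hcoerc : ∀ v : Fin d → ℝ, m * ∑ i, v i ^ 2 ≤ v ⬝ᵥ (H x₀ x₀ *ᵥ v))
    (W : Set (EuclideanSpace ℝ (Fin d))) (hconv : Convex ℝ W) (hx₀ : x₀ ∈ W)
    (hclose : ∀ x ∈ W, ∀ y ∈ W, ∀ v : Fin d → ℝ,
      Real.sqrt (∑ i, ((H x y - H x₀ x₀) *ᵥ v) i ^ 2) ≤ (m / 2) * Real.sqrt (∑ i, v i ^ 2)) :
    ∀ x ∈ W, ∀ y ∈ W, (m / 2) * ‖y - x‖ ^ 2 ≤ ‖F x - F y‖ ^ 2 := by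
  intro x hx y hy
  set v : EuclideanSpace ℝ (Fin d) := y - x with hv
  set v' : Fin d → ℝ := fun j => v j with hv'
  set γ : ℝ → EuclideanSpace ℝ (Fin d) := fun t => x + t • v with hγ
  -- norm identity
  have hsumnn : (0:ℝ) ≤ ∑ i, v' i ^ 2 := Finset.sum_nonneg fun i _ => sq_nonneg _
  have hnorm : ‖y - x‖ ^ 2 = ∑ i, v' i ^ 2 := by
    rw [EuclideanSpace.norm_eq, Real.sq_sqrt (Finset.sum_nonneg fun i _ => sq_nonneg _)]
    simp [Real.norm_eq_abs, sq_abs, hv', hv]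
  set c : ℝ := (m / 2) * ∑ i, v' i ^ 2 with hc
  -- γ maps [0,1] into W
  have hγW : ∀ t ∈ Set.Icc (0:ℝ) 1, γ t ∈ W := by
    intro t ht
    have := hconv hx hy (by linarith [ht.2] : (0:ℝ) ≤ 1 - t) ht.1 (by ring)
    convert this using 1
    simp only [hγ, hv]
    module
  -- φ : derivative along the segment
  set φ : ℝ → EuclideanSpace ℝ (Fin p) := fun t => fderiv ℝ F (γ t) v with hφ
  have hγcont : Continuous γ := by
    exact continuous_const.add (continuous_id.smul continuous_const)
  have hφcont : Continuous φ :=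
    ((hF.continuous_fderiv one_ne_zero).comp hγcont).clm_apply continuous_const
  have hderiv : ∀ t : ℝ, HasDerivAt (fun t => F (γ t)) (φ t) t := by
    intro t
    have h1 : HasDerivAt γ v t := by
      simpa [hγ] using ((hasDerivAt_id t).smul_const v).const_add x
    exact (hF.differentiable one_ne_zero (γ t)).hasFDerivAt.comp_hasDerivAt t h1
  have hFTC : (∫ t in (0:ℝ)..1, φ t) = F y - F x := by
    rw [intervalIntegral.integral_eq_sub_of_hasDerivAt (fun t _ => hderiv t)
      (hφcont.intervalIntegrable 0 1)]
    simp [hγ, hv]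
  -- move to set integral over Ioc 0 1
  have hIoc : (∫ t in (0:ℝ)..1, φ t) = ∫ t in Set.Ioc (0:ℝ) 1, φ t := by
    rw [intervalIntegral.integral_of_le (by norm_num : (0:ℝ) ≤ 1)]
  set w : EuclideanSpace ℝ (Fin p) := ∫ t in Set.Ioc (0:ℝ) 1, φ t with hw
  have hwFyx : w = F y - F x := by rw [← hIoc]; exact hFTC
  -- pointwise bound
  have hpt : ∀ a ∈ W, ∀ b ∈ W, c ≤ (inner ℝ (fderiv ℝ F a v) (fderiv ℝ F b v) : ℝ) := by
    intro a ha b hb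
    have hinner : (inner ℝ (fderiv ℝ F a v) (fderiv ℝ F b v) : ℝ)
        = v' ⬝ᵥ (H a b *ᵥ v') := by
      rw [hH]
      rw [← dot_aux]
      rw [PiLp.inner_apply]
      simp only [RCLike.inner_apply, conj_trivial]
      rw [dotProduct]
      refine Finset.sum_congr rfl fun i _ => ?_
      rw [fderiv_coord F hF DF hDF a v i, fderiv_coord F hF DF hDF b v i]
      exact mul_comm _ _
    rw [hinner]
    have hsplit : v' ⬝ᵥ (H a b *ᵥ v')
        = v' ⬝ᵥ (H x₀ x₀ *ᵥ v') + v' ⬝ᵥ ((H a b - H x₀ x₀) *ᵥ v') := by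
      rw [Matrix.sub_mulVec, dotProduct_sub]; ring
    rw [hsplit]
    have h1 : m * ∑ i, v' i ^ 2 ≤ v' ⬝ᵥ (H x₀ x₀ *ᵥ v') := hcoerc v'
    have h2 : |v' ⬝ᵥ ((H a b - H x₀ x₀) *ᵥ v')| ≤ (m / 2) * ∑ i, v' i ^ 2 := by
      have hCS := cs_aux v' ((H a b - H x₀ x₀) *ᵥ v')
      have hcl := hclose a ha b hb v'
      calc |v' ⬝ᵥ ((H a b - H x₀ x₀) *ᵥ v')|
          ≤ Real.sqrt (∑ i, v' i ^ 2) * Real.sqrt (∑ i, ((H a b - H x₀ x₀) *ᵥ v') i ^ 2) := by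
            simpa [dotProduct] using hCS
        _ ≤ Real.sqrt (∑ i, v' i ^ 2) * ((m / 2) * Real.sqrt (∑ i, v' i ^ 2)) := by
            exact mul_le_mul_of_nonneg_left hcl (Real.sqrt_nonneg _)
        _ = (m / 2) * (Real.sqrt (∑ i, v' i ^ 2) * Real.sqrt (∑ i, v' i ^ 2)) := by ring
        _ = (m / 2) * ∑ i, v' i ^ 2 := by rw [Real.mul_self_sqrt hsumnn]
    rw [hc]; linarith [neg_abs_le (v' ⬝ᵥ ((H a b - H x₀ x₀) *ᵥ v')), h1, h2]
  -- integrability facts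
  have hmeas : MeasurableSet (Set.Ioc (0:ℝ) 1) := measurableSet_Ioc
  have hvol : volume.real (Set.Ioc (0:ℝ) 1) = 1 := by simp
  have hφint : IntegrableOn φ (Set.Ioc (0:ℝ) 1) volume := hφcont.integrableOn_Ioc
  -- inner step: for fixed t with γ t ∈ W, c ≤ ⟪φ t, w⟫
  have hstep1 : ∀ t ∈ Set.Ioc (0:ℝ) 1, c ≤ (inner ℝ (φ t) w : ℝ) := by
    intro t ht
    have htW : γ t ∈ W := hγW t (Set.mem_Icc_of_Ioc ht)
    have hswap : (inner ℝ (φ t) w : ℝ) = ∫ s in Set.Ioc (0:ℝ) 1, (inner ℝ (φ t) (φ s) : ℝ) := by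
      rw [hw]; exact (integral_inner (𝕜 := ℝ) hφint (φ t)).symm
    rw [hswap]
    have hle : ∀ s ∈ Set.Ioc (0:ℝ) 1, c ≤ (inner ℝ (φ t) (φ s) : ℝ) := by
      intro s hs
      exact hpt (γ t) htW (γ s) (hγW s (Set.mem_Icc_of_Ioc hs))
    have hgint : IntegrableOn (fun s => (inner ℝ (φ t) (φ s) : ℝ)) (Set.Ioc (0:ℝ) 1) volume := by
      exact (Continuous.inner (𝕜 := ℝ) continuous_const hφcont).integrableOn_Ioc
    calc c = ∫ _ in Set.Ioc (0:ℝ) 1, c := by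
          rw [setIntegral_const, hvol, one_smul]
      _ ≤ ∫ s in Set.Ioc (0:ℝ) 1, (inner ℝ (φ t) (φ s) : ℝ) :=
          setIntegral_mono_on (integrableOn_const (by simp)) hgint hmeas hle
  -- outer step
  have houter : c ≤ (inner ℝ w w : ℝ) := by
    have hswap : (inner ℝ w w : ℝ) = ∫ t in Set.Ioc (0:ℝ) 1, (inner ℝ w (φ t) : ℝ) := by
      exact (integral_inner (𝕜 := ℝ) hφint w).symm
    rw [hswap]
    have hgint : IntegrableOn (fun t => (inner ℝ w (φ t) : ℝ)) (Set.Ioc (0:ℝ) 1) volume :=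
      (Continuous.inner (𝕜 := ℝ) continuous_const hφcont).integrableOn_Ioc
    calc c = ∫ _ in Set.Ioc (0:ℝ) 1, c := by
          rw [setIntegral_const, hvol, one_smul]
      _ ≤ ∫ t in Set.Ioc (0:ℝ) 1, (inner ℝ w (φ t) : ℝ) := by
          refine setIntegral_mono_on (integrableOn_const (by simp)) hgint hmeas ?_
          intro t ht
          rw [real_inner_comm]
          exact hstep1 t ht
  have hfinal : (inner ℝ w w : ℝ) = ‖F x - F y‖ ^ 2 := by
    rw [real_inner_self_eq_norm_sq, hwFyx, ← norm_neg]
    congr 1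
    abel
  rw [hnorm] at *
  rw [← hfinal]
  exact houter
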